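/- Let m > 0, ω(k) = √(‖k‖² + m²), let h : ℝ³ → ℂ be continuous, L > 0, and let χ_I : ℝ³ → ℂ be measurable with ∫_{ℝ³} (1 + ‖x‖)·|χ_I(x)| dx < ∞. Then lim_{V→∞} ∫_{ℝ³} |χ_I(x)|·‖ω^{-1/2}·((h_x)_L − (h_x)_{L,V})‖₂ dx = 0, where ω^{-1/2}·g denotes the function k ↦ ω(k)^{-1/2}·g(k). -/

import Mathlib

open MeasureTheory
open scoped RealInnerProductSpace

/-- The nearest lattice point `q_V(k)` of the momentum lattice `Γ_V`, defined
componentwise by `q_V(k)_j = (2π/V)·⌊V·k_j/(2π) + 1/2⌋`. -/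
noncomputable def qV (V : ℝ) (k : EuclideanSpace ℝ (Fin 3)) :
    EuclideanSpace ℝ (Fin 3) :=
  WithLp.toLp 2 fun j => (2 * Real.pi / V) * (⌊V * k j / (2 * Real.pi) + 1 / 2⌋ : ℤ)

/-- The Klein–Gordon one-particle energy `ω(k) = √(‖k‖² + m²)`. -/
noncomputable def omegaKG (m : ℝ) (k : EuclideanSpace ℝ (Fin 3)) : ℝ :=
  Real.sqrt (‖k‖ ^ 2 + m ^ 2)

/-- The cube `I_L = [−L,L]³ ⊂ ℝ³`. -/
def cubeI (L : ℝ) : Set (EuclideanSpace ℝ (Fin 3)) :=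
  {k | ∀ j, k j ∈ Set.Icc (-L) L}

/-- The cutoff one-particle function `(h_x)_L(k) = h(k)·e^{i⟨k,x⟩}·χ_{I_L}(k)`. -/
noncomputable def hxL (h : EuclideanSpace ℝ (Fin 3) → ℂ) (L : ℝ)
    (x : EuclideanSpace ℝ (Fin 3)) : EuclideanSpace ℝ (Fin 3) → ℂ :=
  (cubeI L).indicator fun k => h k * Complex.exp (Complex.I * (⟪k, x⟫ : ℝ))

/-- The lattice approximation
`(h_x)_{L,V}(k) = h(q_V(k))·e^{i⟨q_V(k),x⟩}·χ_{I_L}(k)`. -/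
noncomputable def hxLV (h : EuclideanSpace ℝ (Fin 3) → ℂ) (L V : ℝ)
    (x : EuclideanSpace ℝ (Fin 3)) : EuclideanSpace ℝ (Fin 3) → ℂ :=
  (cubeI L).indicator fun k =>
    h (qV V k) * Complex.exp (Complex.I * (⟪qV V k, x⟫ : ℝ))

set_option maxHeartbeats 1000000

open scoped ENNReal

section helpers

lemma abs_exp_I_mul_sub_one (t : ℝ) :
    ‖Complex.exp (Complex.I * t) - 1‖ ≤ |t| := by
  have h1 : Complex.exp (Complex.I * t) = Real.cos t + Real.sin t * Complex.I := by
    rw [mul_comm]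
    simpa using Complex.exp_mul_I (x := (t : ℂ))
  have hsq : ‖Complex.exp (Complex.I * t) - 1‖ ^ 2 ≤ |t| ^ 2 := by
    rw [Complex.sq_norm, h1]
    have : Complex.normSq (Real.cos t + Real.sin t * Complex.I - 1)
        = (Real.cos t - 1) ^ 2 + Real.sin t ^ 2 := by
      simp [Complex.normSq_apply, Complex.cos_ofReal_re, Complex.sin_ofReal_re]
      ring
    rw [this, sq_abs]
    have hc := Real.one_sub_sq_div_two_le_cos (x := t)
    have hs := Real.sin_sq_add_cos_sq t
    nlinarith
  exact (pow_le_pow_iff_left₀ (norm_nonneg _) (abs_nonneg t) two_ne_zero).mp hsq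

lemma qV_coord_close (V : ℝ) (hV : 0 < V) (k : EuclideanSpace ℝ (Fin 3)) (j : Fin 3) :
    |qV V k j - k j| ≤ Real.pi / V := by
  have hπ : (0:ℝ) < 2 * Real.pi := by positivity
  set t : ℝ := V * k j / (2 * Real.pi) with ht
  have hk : k j = (2 * Real.pi / V) * t := by
    rw [ht]; field_simp
  have h1 : (⌊t + 1/2⌋ : ℝ) ≤ t + 1/2 := Int.floor_le _
  have h2 : t - 1/2 ≤ (⌊t + 1/2⌋ : ℝ) := by
    have := Int.lt_floor_add_one (t + 1/2)
    linarith
  have habs : |(⌊t + 1/2⌋ : ℝ) - t| ≤ 1/2 := abs_le.2 ⟨by linarith, by linarith⟩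
  have hq : qV V k j = (2 * Real.pi / V) * (⌊t + 1/2⌋ : ℝ) := rfl
  have heq : qV V k j - k j = (2 * Real.pi / V) * ((⌊t + 1/2⌋ : ℝ) - t) := by
    rw [hq]; nth_rewrite 1 [hk]; ring
  rw [heq, abs_mul, abs_of_pos (by positivity : (0:ℝ) < 2 * Real.pi / V)]
  calc 2 * Real.pi / V * |(⌊t + 1/2⌋:ℝ) - t| ≤ 2 * Real.pi / V * (1/2) :=
        mul_le_mul_of_nonneg_left habs (by positivity)
    _ = Real.pi / V := by ring

lemma norm_le_sqrt3_mul (y : EuclideanSpace ℝ (Fin 3)) (a : ℝ) (ha : 0 ≤ a)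
    (hy : ∀ j, |y j| ≤ a) : ‖y‖ ≤ Real.sqrt 3 * a := by
  rw [EuclideanSpace.norm_eq]
  have : ∑ i : Fin 3, ‖y i‖ ^ 2 ≤ 3 * a ^ 2 := by
    have h0 := hy 0; have h1 := hy 1; have h2 := hy 2
    simp only [Fin.sum_univ_three, Real.norm_eq_abs]
    nlinarith [abs_nonneg (y 0), abs_nonneg (y 1), abs_nonneg (y 2),
      sq_abs (y 0), sq_abs (y 1), sq_abs (y 2)]
  calc Real.sqrt (∑ i : Fin 3, ‖y i‖ ^ 2) ≤ Real.sqrt (3 * a ^ 2) := Real.sqrt_le_sqrt this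
    _ = Real.sqrt 3 * a := by rw [Real.sqrt_mul (by norm_num), Real.sqrt_sq ha]

lemma qV_dist (V : ℝ) (hV : 0 < V) (k : EuclideanSpace ℝ (Fin 3)) :
    ‖qV V k - k‖ ≤ Real.sqrt 3 * (Real.pi / V) := by
  apply norm_le_sqrt3_mul _ _ (by positivity)
  intro j
  have : (qV V k - k) j = qV V k j - k j := rfl
  rw [this]
  exact qV_coord_close V hV k j

lemma cubeI_measurable (L : ℝ) : MeasurableSet (cubeI L) := by
  have : cubeI L = ⋂ j : Fin 3, (fun k : EuclideanSpace ℝ (Fin 3) => k j) ⁻¹' Set.Icc (-L) L := by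
    ext k; simp [cubeI]
  rw [this]
  exact MeasurableSet.iInter fun j => ((measurable_pi_apply j).comp (WithLp.measurable_ofLp 2 _)) measurableSet_Icc

lemma cubeI_norm_le {L : ℝ} (hL : 0 ≤ L) {k : EuclideanSpace ℝ (Fin 3)} (hk : k ∈ cubeI L) :
    ‖k‖ ≤ Real.sqrt 3 * L :=
  norm_le_sqrt3_mul k L hL fun j => abs_le.2 ⟨(hk j).1, (hk j).2⟩

lemma cubeI_volume_lt_top (L : ℝ) (hL : 0 < L) : volume (cubeI L) < ⊤ := by
  have hsub : cubeI L ⊆ Metric.closedBall 0 (Real.sqrt 3 * L) := by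
    intro k hk
    rw [Metric.mem_closedBall, dist_zero_right]
    exact cubeI_norm_le hL.le hk
  exact lt_of_le_of_lt (measure_mono hsub) (measure_closedBall_lt_top)

lemma eLpNorm_weighted_diff_le (m : ℝ) (hm : 0 < m)
    (h : EuclideanSpace ℝ (Fin 3) → ℂ) (L V : ℝ) (hL : 0 < L)
    (x : EuclideanSpace ℝ (Fin 3)) (c : ℝ) (hc : 0 ≤ c)
    (hpt : ∀ k ∈ cubeI L, ‖hxL h L x k - hxLV h L V x k‖ ≤ c) :
    (eLpNorm (fun k => ((Real.sqrt (omegaKG m k))⁻¹ : ℝ) *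
        (hxL h L x k - hxLV h L V x k)) 2 volume).toReal
      ≤ (Real.sqrt m)⁻¹ * c * ((volume (cubeI L)) ^ ((1:ℝ)/2)).toReal := by
  have hsm : (0:ℝ) < Real.sqrt m := Real.sqrt_pos.2 hm
  have hwt : ∀ k, (Real.sqrt (omegaKG m k))⁻¹ ≤ (Real.sqrt m)⁻¹ := by
    intro k
    have h1 : m ≤ omegaKG m k := by
      rw [omegaKG]
      calc m = Real.sqrt (m ^ 2) := (Real.sqrt_sq hm.le).symm
        _ ≤ Real.sqrt (‖k‖ ^ 2 + m ^ 2) := Real.sqrt_le_sqrt (le_add_of_nonneg_left (sq_nonneg _))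
    exact inv_anti₀ hsm (Real.sqrt_le_sqrt h1)
  set c' : ℝ := (Real.sqrt m)⁻¹ * c with hc'
  have hc'0 : 0 ≤ c' := by positivity
  have hmono : ∀ k, ‖((Real.sqrt (omegaKG m k))⁻¹ : ℝ) *
      (hxL h L x k - hxLV h L V x k)‖ ≤ (cubeI L).indicator (fun _ => c') k := by
    intro k
    by_cases hk : k ∈ cubeI L
    · rw [Set.indicator_of_mem hk]
      have : ‖((Real.sqrt (omegaKG m k))⁻¹ : ℝ) * (hxL h L x k - hxLV h L V x k)‖
          = |(Real.sqrt (omegaKG m k))⁻¹| * ‖hxL h L x k - hxLV h L V x k‖ := by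
        rw [norm_mul, Complex.norm_real, Real.norm_eq_abs]
      rw [this, abs_of_nonneg (inv_nonneg.2 (Real.sqrt_nonneg _))]
      exact mul_le_mul (hwt k) (hpt k hk) (norm_nonneg _) (by positivity)
    · rw [Set.indicator_of_notMem hk]
      simp [hxL, hxLV, Set.indicator_of_notMem hk]
  have hle := eLpNorm_mono_real (p := 2) (μ := volume) hmono
  rw [eLpNorm_indicator_const (cubeI_measurable L) two_ne_zero ENNReal.ofNat_ne_top] at hle
  have hfin : (‖c'‖₊ : ℝ≥0∞) * volume (cubeI L) ^ (1 / (2:ℝ≥0∞).toReal) ≠ ⊤ := by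
    apply ENNReal.mul_ne_top ENNReal.coe_ne_top
    exact (ENNReal.rpow_lt_top_of_nonneg (by norm_num) (cubeI_volume_lt_top L hL).ne).ne
  have hfinal := ENNReal.toReal_mono hfin hle
  rw [ENNReal.toReal_mul] at hfinal
  simp only [ENNReal.coe_toReal, coe_nnnorm, Real.norm_eq_abs, abs_of_nonneg hc'0] at hfinal
  calc _ ≤ c' * (volume (cubeI L) ^ (1 / (2:ℝ≥0∞).toReal)).toReal := hfinal
    _ = (Real.sqrt m)⁻¹ * c * ((volume (cubeI L)) ^ ((1:ℝ)/2)).toReal := by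
        norm_num [hc']

end helpers

/-- Let `m > 0`, `ω(k) = √(‖k‖² + m²)`, `h : ℝ³ → ℂ` continuous, `L > 0`, and
`χ_I : ℝ³ → ℂ` measurable with `∫ (1 + ‖x‖)·|χ_I(x)| dx < ∞`.  Then
`lim_{V→∞} ∫ |χ_I(x)|·‖ω^{-1/2}·((h_x)_L − (h_x)_{L,V})‖₂ dx = 0`, where
`ω^{-1/2}·g` is the function `k ↦ ω(k)^{-1/2}·g(k)`. -/
theorem tendsto_integral_chi_mul_eLpNorm_sqrtInvOmega_hxL_sub_hxLV
    (m : ℝ) (hm : 0 < m)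
    (h : EuclideanSpace ℝ (Fin 3) → ℂ) (hh : Continuous h) (L : ℝ) (hL : 0 < L)
    (χI : EuclideanSpace ℝ (Fin 3) → ℂ) (hχm : Measurable χI)
    (hχ : Integrable (fun x => (1 + ‖x‖) * ‖χI x‖) volume) :
    Filter.Tendsto
      (fun V : ℝ => ∫ x, ‖χI x‖ *
        (eLpNorm
          (fun k => ((Real.sqrt (omegaKG m k))⁻¹ : ℝ) *
            (hxL h L x k - hxLV h L V x k)) 2 volume).toReal)
      Filter.atTop (nhds 0) := by
  rw [Metric.tendsto_atTop]
  intro ε' hε'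
  -- the compact set K and the bound M on h over K
  set R : ℝ := Real.sqrt 3 * (L + Real.pi) with hR
  have hR0 : 0 ≤ R := by positivity
  set K : Set (EuclideanSpace ℝ (Fin 3)) := Metric.closedBall 0 R with hKdef
  obtain ⟨M₀, hM₀⟩ := (isCompact_closedBall (0 : EuclideanSpace ℝ (Fin 3)) R).exists_bound_of_continuousOn hh.continuousOn
  set M : ℝ := max M₀ 0 with hMdef
  have hM : ∀ y ∈ K, ‖h y‖ ≤ M := fun y hy => le_trans (hM₀ y hy) (le_max_left _ _)
  have hM0 : 0 ≤ M := le_max_right _ _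
  -- constants
  set D : ℝ := ((volume (cubeI L)) ^ ((1:ℝ)/2)).toReal with hDdef
  have hD0 : 0 ≤ D := ENNReal.toReal_nonneg
  set Cm : ℝ := (Real.sqrt m)⁻¹ with hCmdef
  have hCm0 : 0 ≤ Cm := inv_nonneg.2 (Real.sqrt_nonneg _)
  set I0 : ℝ := ∫ x, (1 + ‖x‖) * ‖χI x‖ with hI0def
  have hI00 : 0 ≤ I0 := integral_nonneg fun x => by positivity
  set ε : ℝ := ε' / (2 * (Cm * D * I0 + 1)) with hεdef
  have hden : (0:ℝ) < 2 * (Cm * D * I0 + 1) := by positivity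
  have hε : 0 < ε := div_pos hε' hden
  -- uniform continuity of h on K
  have hUC := (isCompact_closedBall (0 : EuclideanSpace ℝ (Fin 3)) R).uniformContinuousOn_of_continuous hh.continuousOn
  rw [Metric.uniformContinuousOn_iff] at hUC
  obtain ⟨δ, hδ0, hδ⟩ := hUC ε hε
  -- the threshold
  set V₀ : ℝ := 1 + Real.sqrt 3 * Real.pi / δ + M * (Real.sqrt 3 * Real.pi) / ε with hV₀def
  refine ⟨V₀, fun V hV => ?_⟩
  have hterm1 : 0 ≤ Real.sqrt 3 * Real.pi / δ := by positivity
  have hterm2 : 0 ≤ M * (Real.sqrt 3 * Real.pi) / ε := by positivity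
  have hV1 : 1 ≤ V := by
    have : (1:ℝ) ≤ V₀ := by rw [hV₀def]; linarith
    linarith
  have hVpos : 0 < V := lt_of_lt_of_le one_pos hV1
  -- key: distance between k and qV V k
  have hqd : ∀ k : EuclideanSpace ℝ (Fin 3), ‖qV V k - k‖ ≤ Real.sqrt 3 * (Real.pi / V) :=
    qV_dist V hVpos
  have hqdδ : Real.sqrt 3 * (Real.pi / V) < δ := by
    have hVgt : Real.sqrt 3 * Real.pi / δ < V := by
      rw [hV₀def] at hV; linarith
    rw [div_lt_iff₀ hδ0] at hVgt
    rw [mul_div_assoc'] at *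
    rw [div_lt_iff₀ hVpos]
    linarith [mul_comm δ V]
  have hMV : M * (Real.sqrt 3 * Real.pi) / V ≤ ε := by
    have hVge : M * (Real.sqrt 3 * Real.pi) / ε ≤ V := by
      rw [hV₀def] at hV; linarith
    rw [div_le_iff₀ hε] at hVge
    rw [div_le_iff₀ hVpos]
    calc M * (Real.sqrt 3 * Real.pi) ≤ V * ε := hVge
      _ = ε * V := mul_comm _ _
  -- pointwise bound on the cube
  have hpt : ∀ x : EuclideanSpace ℝ (Fin 3), ∀ k ∈ cubeI L,
      ‖hxL h L x k - hxLV h L V x k‖ ≤ ε * (1 + ‖x‖) := by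
    intro x k hk
    have hkK : k ∈ K := by
      rw [hKdef, Metric.mem_closedBall, dist_zero_right]
      calc ‖k‖ ≤ Real.sqrt 3 * L := cubeI_norm_le hL.le hk
        _ ≤ R := by rw [hR]; nlinarith [Real.sqrt_nonneg 3, Real.pi_pos]
    have hqK : qV V k ∈ K := by
      rw [hKdef, Metric.mem_closedBall, dist_zero_right]
      have : ‖qV V k‖ ≤ ‖k‖ + ‖qV V k - k‖ := by
        have := norm_add_le k (qV V k - k)
        simpa [add_sub_cancel] using this
      have hπV : Real.pi / V ≤ Real.pi := by
        rw [div_le_iff₀ hVpos]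
        nlinarith [Real.pi_pos]
      calc ‖qV V k‖ ≤ ‖k‖ + ‖qV V k - k‖ := this
        _ ≤ Real.sqrt 3 * L + Real.sqrt 3 * (Real.pi / V) :=
            add_le_add (cubeI_norm_le hL.le hk) (hqd k)
        _ ≤ Real.sqrt 3 * L + Real.sqrt 3 * Real.pi := by
            have := Real.sqrt_nonneg 3
            nlinarith
        _ = R := by rw [hR]; ring
    -- unfold indicators
    rw [hxL, hxLV, Set.indicator_of_mem hk, Set.indicator_of_mem hk]
    set a := h k
    set b := h (qV V k)
    set θ : ℝ := ⟪k, x⟫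
    set φ : ℝ := ⟪qV V k, x⟫
    have hsplit : a * Complex.exp (Complex.I * θ) - b * Complex.exp (Complex.I * φ)
        = (a - b) * Complex.exp (Complex.I * θ)
          + b * (Complex.exp (Complex.I * θ) - Complex.exp (Complex.I * φ)) := by ring
    have habs1 : ‖Complex.exp (Complex.I * (θ:ℂ))‖ = 1 := by
      rw [Complex.norm_exp]
      simp
    have habs2 : ‖Complex.exp (Complex.I * (θ:ℂ)) - Complex.exp (Complex.I * (φ:ℂ))‖
        ≤ |θ - φ| := by
      have hfac : Complex.exp (Complex.I * (θ:ℂ)) - Complex.exp (Complex.I * (φ:ℂ))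
          = Complex.exp (Complex.I * (φ:ℂ)) * (Complex.exp (Complex.I * ((θ - φ : ℝ) : ℂ)) - 1) := by
        rw [mul_sub, mul_one, ← Complex.exp_add]
        push_cast
        ring_nf
      rw [hfac, norm_mul]
      have he1 : ‖Complex.exp (Complex.I * (φ:ℂ))‖ = 1 := by
        rw [Complex.norm_exp]; simp
      rw [he1, one_mul]
      exact abs_exp_I_mul_sub_one (θ - φ)
    have hθφ : |θ - φ| ≤ Real.sqrt 3 * (Real.pi / V) * ‖x‖ := by
      have : θ - φ = ⟪k - qV V k, x⟫ := by
        rw [inner_sub_left]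
      rw [this]
      calc |⟪k - qV V k, x⟫| ≤ ‖k - qV V k‖ * ‖x‖ := abs_real_inner_le_norm _ _
        _ ≤ Real.sqrt 3 * (Real.pi / V) * ‖x‖ := by
            apply mul_le_mul_of_nonneg_right _ (norm_nonneg x)
            rw [norm_sub_rev]
            exact hqd k
    have hab : ‖a - b‖ ≤ ε := by
      have hdist : dist k (qV V k) < δ := by
        rw [dist_eq_norm, norm_sub_rev]
        exact lt_of_le_of_lt (hqd k) hqdδ
      have := hδ k hkK (qV V k) hqK hdist
      rw [Complex.dist_eq] at this
      exact this.le
    have hbM : ‖b‖ ≤ M := hM _ hqK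
    calc ‖a * Complex.exp (Complex.I * θ) - b * Complex.exp (Complex.I * φ)‖
        ≤ ‖(a - b) * Complex.exp (Complex.I * θ)‖
          + ‖b * (Complex.exp (Complex.I * θ) - Complex.exp (Complex.I * φ))‖ := by
          rw [hsplit]; exact norm_add_le _ _
      _ = ‖a - b‖ * 1
          + ‖b‖ * ‖Complex.exp (Complex.I * (θ:ℂ)) - Complex.exp (Complex.I * (φ:ℂ))‖ := by
          rw [norm_mul, norm_mul, habs1]
      _ ≤ ε + M * (Real.sqrt 3 * (Real.pi / V) * ‖x‖) := by
          rw [mul_one]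
          exact add_le_add hab
            (mul_le_mul hbM (le_trans habs2 hθφ) (norm_nonneg _) hM0)
      _ ≤ ε * (1 + ‖x‖) := by
          have h1 : M * (Real.sqrt 3 * (Real.pi / V) * ‖x‖)
              = (M * (Real.sqrt 3 * Real.pi) / V) * ‖x‖ := by field_simp
          rw [h1]
          have := mul_le_mul_of_nonneg_right hMV (norm_nonneg x)
          nlinarith [norm_nonneg x]
  -- per-x bound then integral comparison
  have hptx : ∀ x, ‖χI x‖ *
      (eLpNorm (fun k => ((Real.sqrt (omegaKG m k))⁻¹ : ℝ) *
        (hxL h L x k - hxLV h L V x k)) 2 volume).toReal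
      ≤ Cm * D * ε * ((1 + ‖x‖) * ‖χI x‖) := by
    intro x
    have hb := eLpNorm_weighted_diff_le m hm h L V hL x (ε * (1 + ‖x‖))
      (by positivity) (hpt x)
    refine le_trans (mul_le_mul_of_nonneg_left hb (norm_nonneg _)) (le_of_eq ?_)
    rw [hCmdef]; ring
  have hF0 : 0 ≤ ∫ x, ‖χI x‖ *
      (eLpNorm (fun k => ((Real.sqrt (omegaKG m k))⁻¹ : ℝ) *
        (hxL h L x k - hxLV h L V x k)) 2 volume).toReal :=
    integral_nonneg fun x => mul_nonneg (norm_nonneg _) ENNReal.toReal_nonneg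
  have hFle : (∫ x, ‖χI x‖ *
      (eLpNorm (fun k => ((Real.sqrt (omegaKG m k))⁻¹ : ℝ) *
        (hxL h L x k - hxLV h L V x k)) 2 volume).toReal)
      ≤ Cm * D * ε * I0 := by
    have hint : Integrable (fun x => Cm * D * ε * ((1 + ‖x‖) * ‖χI x‖)) volume :=
      hχ.const_mul _
    calc _ ≤ ∫ x, Cm * D * ε * ((1 + ‖x‖) * ‖χI x‖) :=
          integral_mono_of_nonneg
            (Filter.Eventually.of_forall fun x =>
              mul_nonneg (norm_nonneg _) ENNReal.toReal_nonneg)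
            hint (Filter.Eventually.of_forall hptx)
      _ = Cm * D * ε * I0 := by rw [hI0def, MeasureTheory.integral_const_mul]
  rw [Real.dist_eq, sub_zero, abs_of_nonneg hF0]
  have hee : ε * (2 * (Cm * D * I0 + 1)) = ε' := by
    rw [hεdef]; field_simp
  have hCDI : 0 ≤ Cm * D * I0 := by positivity
  calc _ ≤ Cm * D * ε * I0 := hFle
    _ < ε' := by nlinarith
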